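/- Let Ψ = (G, ψ) be a signed graph on a connected graph G. Then the spectrum of the signed adjacency matrix A(Ψ) equals the spectrum of the adjacency matrix A(G) if and only if Ψ is balanced. (Acharya's spectral criterion.) -/

import Mathlib

open Matrix
open scoped Classical

noncomputable section

namespace GG

variable {V : Type*}

/-- The gain of a walk: product of the gains of its oriented edges. -/
def walkGain {G : SimpleGraph V} (φ : V → V → ℂ) {u v : V} (p : G.Walk u v) : ℂ :=
  (p.darts.map (fun d => φ d.toProd.1 d.toProd.2)).prod

/-- `φ` is a `𝕋`-gain function on `G`: unit modulus on edges, inverse under reversal. -/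
def IsGain (G : SimpleGraph V) (φ : V → V → ℂ) : Prop :=
  (∀ i j, G.Adj i j → ‖φ i j‖ = 1) ∧ (∀ i j, G.Adj i j → φ j i = (φ i j)⁻¹)

/-- Adjacency matrix of a gain graph. -/
def gainAdj [Fintype V] [DecidableEq V] (G : SimpleGraph V) (φ : V → V → ℂ) :
    Matrix V V ℂ := fun i j => if G.Adj i j then φ i j else 0

/-- A gain graph is balanced if every cycle has gain 1. -/
def GBalanced (G : SimpleGraph V) (φ : V → V → ℂ) : Prop :=
  ∀ (u : V) (c : G.Walk u u), c.IsCycle → walkGain φ c = 1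

/-- All shortest paths between any pair of vertices have the same gain. -/
def DistCompatible (G : SimpleGraph V) (φ : V → V → ℂ) : Prop :=
  ∀ (s t : V) (p q : G.Walk s t), p.length = G.dist s t → q.length = G.dist s t →
    walkGain φ p = walkGain φ q

/-- The set of gains of shortest `s`-`t` paths. -/
def shortestGains (G : SimpleGraph V) (φ : V → V → ℂ) (s t : V) : Set ℂ :=
  {z | ∃ p : G.Walk s t, p.length = G.dist s t ∧ walkGain φ p = z}

/-- The element of `S` maximizing the real part, ties broken by maximal imaginary part
(correct for finite nonempty sets of gains). -/
def lexMaxGain (S : Set ℂ) : ℂ :=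
  ⟨sSup (Complex.re '' S), sSup (Complex.im '' {z ∈ S | z.re = sSup (Complex.re '' S)})⟩

/-- The element of `S` minimizing the real part, ties broken by minimal imaginary part. -/
def lexMinGain (S : Set ℂ) : ℂ :=
  ⟨sInf (Complex.re '' S), sInf (Complex.im '' {z ∈ S | z.re = sInf (Complex.re '' S)})⟩

/-- The maximum gain distance matrix `D^max_<(Φ)` with respect to a strict order `lt`. -/
def Dmax [Fintype V] [DecidableEq V] (G : SimpleGraph V) (φ : V → V → ℂ)
    (lt : V → V → Prop) : Matrix V V ℂ := fun s t =>
  if lt s t then lexMaxGain (shortestGains G φ s t) * (G.dist s t : ℂ)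
  else if lt t s then (starRingEnd ℂ) (lexMaxGain (shortestGains G φ t s)) * (G.dist s t : ℂ)
  else 0

/-- The minimum gain distance matrix `D^min_<(Φ)` with respect to a strict order `lt`. -/
def Dmin [Fintype V] [DecidableEq V] (G : SimpleGraph V) (φ : V → V → ℂ)
    (lt : V → V → Prop) : Matrix V V ℂ := fun s t =>
  if lt s t then lexMinGain (shortestGains G φ s t) * (G.dist s t : ℂ)
  else if lt t s then (starRingEnd ℂ) (lexMinGain (shortestGains G φ t s)) * (G.dist s t : ℂ)
  else 0

/-- Vertex order independence: the gain distance matrices agree for the standard order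
and its reverse. -/
def OrderIndependent [Fintype V] [DecidableEq V] [LinearOrder V] (G : SimpleGraph V)
    (φ : V → V → ℂ) : Prop :=
  Dmax G φ (· < ·) = Dmax G φ (fun a b => b < a) ∧
  Dmin G φ (· < ·) = Dmin G φ (fun a b => b < a)

/-- The largest (real) eigenvalue of a matrix. -/
def maxEig [Fintype V] [DecidableEq V] (A : Matrix V V ℂ) : ℝ :=
  sSup {r : ℝ | (r : ℂ) ∈ spectrum ℂ A}

/-- The spectral radius of a matrix. -/
def specRad [Fintype V] [DecidableEq V] (A : Matrix V V ℂ) : ℝ :=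
  sSup {r : ℝ | ∃ z ∈ spectrum ℂ A, ‖z‖ = r}

/-- The distance matrix of the underlying graph, as a complex matrix. -/
def distMatrix [Fintype V] [DecidableEq V] (G : SimpleGraph V) : Matrix V V ℂ :=
  fun i j => (G.dist i j : ℂ)

/-- Weighted gain adjacency matrix `A(Φ_w)`. -/
def wGainAdj [Fintype V] [DecidableEq V] (G : SimpleGraph V) (φ : V → V → ℂ)
    (w : V → V → ℝ) : Matrix V V ℂ := fun i j => if G.Adj i j then φ i j * (w i j : ℂ) else 0

/-- Weighted adjacency matrix `A(G_w)` of the underlying weighted graph. -/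
def wAdj [Fintype V] [DecidableEq V] (G : SimpleGraph V) (w : V → V → ℝ) :
    Matrix V V ℂ := fun i j => if G.Adj i j then (w i j : ℂ) else 0



/-! ### Auxiliary lemmas -/

section Aux

variable {G : SimpleGraph V} {φ : V → V → ℂ}

@[simp] lemma walkGain_nil {u : V} : walkGain φ (SimpleGraph.Walk.nil : G.Walk u u) = 1 := rfl

@[simp] lemma walkGain_cons {u v w : V} (h : G.Adj u v) (p : G.Walk v w) :
    walkGain φ (SimpleGraph.Walk.cons h p) = φ u v * walkGain φ p := by
  simp [walkGain]

@[simp] lemma walkGain_append {u v w : V} (p : G.Walk u v) (q : G.Walk v w) :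
    walkGain φ (p.append q) = walkGain φ p * walkGain φ q := by
  simp [walkGain, SimpleGraph.Walk.darts_append]

lemma walkGain_pm (hsgn : ∀ i j, G.Adj i j → φ i j = 1 ∨ φ i j = -1)
    {u v : V} (p : G.Walk u v) : walkGain φ p = 1 ∨ walkGain φ p = -1 := by
  induction p with
  | nil => left; rfl
  | cons h p ih =>
    rw [walkGain_cons]
    rcases hsgn _ _ h with h1 | h1 <;> rcases ih with h2 | h2 <;> simp [h1, h2]

lemma walkGain_reverse (hs : ∀ i j, φ i j = φ j i) {u v : V} (p : G.Walk u v) :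
    walkGain φ p.reverse = walkGain φ p := by
  rw [walkGain, SimpleGraph.Walk.darts_reverse, List.map_reverse, List.prod_reverse,
    List.map_map]
  rw [walkGain]
  congr 1
  apply List.map_congr_left
  intro d _
  exact hs d.toProd.2 d.toProd.1

lemma path_edge_start {u y : V} (q : G.Walk u y) (hq : q.IsPath) (he : s(u, y) ∈ q.edges) :
    q.length = 1 := by
  cases q with
  | nil => simp at he
  | @cons _ z _ h' r =>
    rw [SimpleGraph.Walk.cons_isPath_iff] at hq
    rw [SimpleGraph.Walk.edges_cons, List.mem_cons] at he
    rcases he with he | he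
    · rw [Sym2.eq_iff] at he
      rcases he with ⟨-, rfl⟩ | ⟨rfl, rfl⟩
      · rw [SimpleGraph.Walk.isPath_iff_eq_nil] at hq
        · simp [hq.1]
      · exact absurd h'.symm (G.irrefl)
    · exact absurd (r.fst_mem_support_of_mem_edges he) hq.2

lemma walkGain_closed
    (hsgn : ∀ i j, G.Adj i j → φ i j = 1 ∨ φ i j = -1)
    (hs : ∀ i j, φ i j = φ j i)
    (hbal : GBalanced G φ) :
    ∀ (n : ℕ) (u : V) (w : G.Walk u u), w.length ≤ n → walkGain φ w = 1 := by
  intro n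
  induction n with
  | zero =>
    intro u w hw
    cases w with
    | nil => rfl
    | cons h p => simp at hw
  | succ n ih =>
    intro u w hw
    cases w with
    | nil => rfl
    | @cons _ y _ h p =>
      rw [SimpleGraph.Walk.length_cons] at hw
      have hpl : p.length ≤ n := by omega
      by_cases hnd : p.support.Nodup
      · have hp : p.IsPath := SimpleGraph.Walk.IsPath.mk' hnd
        by_cases he : s(u, y) ∈ p.edges
        · have hrev : p.reverse.IsPath := hp.reverse
          have herev : s(u, y) ∈ p.reverse.edges := by
            rw [SimpleGraph.Walk.edges_reverse, List.mem_reverse]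
            exact he
          have hl1 : p.length = 1 := by
            have := path_edge_start p.reverse hrev herev
            simpa using this
          cases p with
          | nil => simp at hl1
          | cons h'' r =>
            cases r with
            | nil =>
              rw [walkGain_cons, walkGain_cons, walkGain_nil, mul_one, hs y u]
              rcases hsgn u y h with h1 | h1 <;> rw [h1] <;> norm_num
            | cons h3 r' => simp [SimpleGraph.Walk.length_cons] at hl1
        · exact hbal u _ ((SimpleGraph.Walk.cons_isCycle_iff p h).mpr ⟨hp, he⟩)
      · obtain ⟨x, hx⟩ : ∃ x, 2 ≤ p.support.count x := by
          by_contra hc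
          push_neg at hc
          exact hnd (List.nodup_iff_count_le_one.mpr fun a => by
            have := hc a; omega)
        have hx1 : x ∈ p.support := by
          rw [← List.count_pos_iff]; omega
        obtain ⟨a, b, hgain, hlen, hxb⟩ : ∃ (a : G.Walk y x) (b : G.Walk x u),
            walkGain φ p = walkGain φ a * walkGain φ b ∧
              a.length + b.length = p.length ∧ x ∈ b.support.tail := by
          refine ⟨p.takeUntil x hx1, p.dropUntil x hx1, ?_, ?_, ?_⟩
          · conv_lhs => rw [← p.take_spec hx1]
            rw [walkGain_append]
          · conv_rhs => rw [← p.take_spec hx1]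
            rw [SimpleGraph.Walk.length_append]
          · have hone := p.count_support_takeUntil_eq_one hx1
            have hsplit : p.support = (p.takeUntil x hx1).support ++
                (p.dropUntil x hx1).support.tail := by
              conv_lhs => rw [← p.take_spec hx1]
              rw [SimpleGraph.Walk.support_append]
            rw [← List.count_pos_iff]
            rw [hsplit, List.count_append, hone] at hx
            omega
        cases b with
        | nil => simp at hxb
        | @cons _ z _ h2 b' =>
          have hxb' : x ∈ b'.support := by simpa using hxb
          have hbg : walkGain φ b' =
              walkGain φ (b'.takeUntil x hxb') * walkGain φ (b'.dropUntil x hxb') := by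
            conv_lhs => rw [← b'.take_spec hxb']
            rw [walkGain_append]
          have hbl : (b'.takeUntil x hxb').length + (b'.dropUntil x hxb').length
              = b'.length := by
            conv_rhs => rw [← b'.take_spec hxb']
            rw [SimpleGraph.Walk.length_append]
          rw [SimpleGraph.Walk.length_cons] at hlen
          have hc1 : walkGain φ (SimpleGraph.Walk.cons h2 (b'.takeUntil x hxb')) = 1 := by
            apply ih
            rw [SimpleGraph.Walk.length_cons]
            omega
          have hc2 : walkGain φ
              (SimpleGraph.Walk.cons h (a.append (b'.dropUntil x hxb'))) = 1 := by
            apply ih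
            rw [SimpleGraph.Walk.length_cons, SimpleGraph.Walk.length_append]
            omega
          rw [walkGain_cons] at hc1 hc2
          rw [walkGain_append] at hc2
          rw [walkGain_cons, hgain, walkGain_cons, hbg]
          calc φ u y * (walkGain φ a * (φ x z *
                (walkGain φ (b'.takeUntil x hxb') * walkGain φ (b'.dropUntil x hxb'))))
              = (φ u y * (walkGain φ a * walkGain φ (b'.dropUntil x hxb'))) *
                (φ x z * walkGain φ (b'.takeUntil x hxb')) := by ring
            _ = 1 := by rw [hc1, hc2, one_mul]

end Aux

section Spectral

variable {n : Type*} [Fintype n] [DecidableEq n]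

open Polynomial

lemma charpoly_units_conj (u : (Matrix n n ℂ)ˣ) (A : Matrix n n ℂ) :
    ((u : Matrix n n ℂ) * A * (↑u⁻¹ : Matrix n n ℂ)).charpoly = A.charpoly := by
  have key : charmatrix ((u : Matrix n n ℂ) * A * (↑u⁻¹ : Matrix n n ℂ)) =
      (C : ℂ →+* ℂ[X]).mapMatrix (u : Matrix n n ℂ) * charmatrix A *
        (C : ℂ →+* ℂ[X]).mapMatrix (↑u⁻¹ : Matrix n n ℂ) := by
    unfold charmatrix
    rw [mul_sub, sub_mul]
    congr 1
    · have hc := Matrix.scalar_commute (X : ℂ[X]) (fun r => Commute.all _ _)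
        ((C : ℂ →+* ℂ[X]).mapMatrix (u : Matrix n n ℂ))
      rw [← hc, mul_assoc, ← RingHom.map_mul, Units.mul_inv, RingHom.map_one, mul_one]
    · rw [← RingHom.map_mul, ← RingHom.map_mul]
  rw [Matrix.charpoly, key, det_mul, det_mul, Matrix.charpoly, mul_comm, ← mul_assoc,
    ← det_mul, ← RingHom.map_mul, Units.inv_mul, RingHom.map_one, det_one, one_mul]

lemma charpoly_diagonal (d : n → ℂ) :
    (Matrix.diagonal d).charpoly = ∏ i, (X - C (d i)) := by
  have h : charmatrix (Matrix.diagonal d) = Matrix.diagonal (fun i => X - C (d i)) := by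
    refine Matrix.ext fun i j => ?_
    by_cases hij : i = j
    · subst hij; simp [charmatrix_apply_eq]
    · rw [charmatrix_apply_ne _ _ _ hij, Matrix.diagonal_apply_ne _ hij,
        Matrix.diagonal_apply_ne _ hij, map_zero, neg_zero]
  rw [Matrix.charpoly, h, det_diagonal]

lemma trace_pow_hermitian {A : Matrix n n ℂ} (hA : A.IsHermitian) (k : ℕ) :
    (A ^ k).trace = ∑ i, ((hA.eigenvalues i : ℂ)) ^ k := by
  set U : Matrix n n ℂ := (Matrix.IsHermitian.eigenvectorUnitary hA : Matrix n n ℂ) with hU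
  have h1 : U * star U = 1 := (Matrix.mem_unitaryGroup_iff).mp (hA.eigenvectorUnitary).2
  have h2 : star U * U = 1 := (Matrix.mem_unitaryGroup_iff').mp (hA.eigenvectorUnitary).2
  set u : (Matrix n n ℂ)ˣ := ⟨U, star U, h1, h2⟩ with hu
  have hinv : (↑u⁻¹ : Matrix n n ℂ) = star U := rfl
  have hAeq : A = (u : Matrix n n ℂ) * Matrix.diagonal (RCLike.ofReal ∘ hA.eigenvalues) *
      (↑u⁻¹ : Matrix n n ℂ) := by
    rw [hinv]; exact hA.spectral_theorem
  conv_lhs => rw [hAeq]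
  rw [Units.conj_pow, Matrix.diagonal_pow, hinv, Matrix.trace_mul_cycle]
  show (star U * U * _).trace = _
  rw [h2, one_mul, Matrix.trace_diagonal]
  simp [Pi.pow_apply]

lemma charpoly_hermitian {A : Matrix n n ℂ} (hA : A.IsHermitian) :
    A.charpoly = ∏ i, (X - C ((hA.eigenvalues i : ℂ))) := by
  set U : Matrix n n ℂ := (Matrix.IsHermitian.eigenvectorUnitary hA : Matrix n n ℂ) with hU
  have h1 : U * star U = 1 := (Matrix.mem_unitaryGroup_iff).mp (hA.eigenvectorUnitary).2
  have h2 : star U * U = 1 := (Matrix.mem_unitaryGroup_iff').mp (hA.eigenvectorUnitary).2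
  set u : (Matrix n n ℂ)ˣ := ⟨U, star U, h1, h2⟩ with hu
  have hinv : (↑u⁻¹ : Matrix n n ℂ) = star U := rfl
  have hAeq : A = (u : Matrix n n ℂ) * Matrix.diagonal (RCLike.ofReal ∘ hA.eigenvalues) *
      (↑u⁻¹ : Matrix n n ℂ) := by
    rw [hinv]; exact hA.spectral_theorem
  calc A.charpoly = (Matrix.diagonal (RCLike.ofReal ∘ hA.eigenvalues)).charpoly := by
        conv_lhs => rw [hAeq]
        exact charpoly_units_conj u _
    _ = _ := by rw [charpoly_diagonal]; rfl

lemma roots_charpoly_hermitian {A : Matrix n n ℂ} (hA : A.IsHermitian) :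
    A.charpoly.roots = Finset.univ.val.map (fun i => (hA.eigenvalues i : ℂ)) := by
  rw [charpoly_hermitian hA]
  have h : (∏ i, (X - C ((hA.eigenvalues i : ℂ)))) =
      ((Finset.univ.val.map (fun i => (hA.eigenvalues i : ℂ))).map (fun a => X - C a)).prod := by
    rw [Multiset.map_map]; rfl
  rw [h, Polynomial.roots_multiset_prod_X_sub_C]

lemma trace_pow_eq_of_charpoly_eq {A B : Matrix n n ℂ} (hA : A.IsHermitian)
    (hB : B.IsHermitian) (h : A.charpoly = B.charpoly) (k : ℕ) :
    (A ^ k).trace = (B ^ k).trace := by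
  have hroots := roots_charpoly_hermitian hA
  rw [h, roots_charpoly_hermitian hB] at hroots
  rw [trace_pow_hermitian hA k, trace_pow_hermitian hB k]
  have h2 := congrArg (fun s : Multiset ℂ => (s.map (fun z => z ^ k)).sum) hroots
  simp only [Multiset.map_map, Function.comp] at h2
  rw [Finset.sum, Finset.sum]
  exact h2.symm

end Spectral

section WalkSum

lemma gainAdj_pow [Fintype V] [DecidableEq V] (G : SimpleGraph V) (φ : V → V → ℂ) :
    ∀ (k : ℕ) (u v : V),
      ((gainAdj G φ) ^ k) u v = ∑ p ∈ G.finsetWalkLength k u v, walkGain φ p := by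
  intro k
  induction k with
  | zero =>
    intro u v
    obtain rfl | h := eq_or_ne u v
    · simp [SimpleGraph.finsetWalkLength, Matrix.one_apply, walkGain]
    · simp [SimpleGraph.finsetWalkLength, Matrix.one_apply, h]
  | succ k ih =>
    intro u v
    rw [pow_succ', Matrix.mul_apply]
    simp only [SimpleGraph.finsetWalkLength]
    rw [Finset.sum_biUnion]
    · simp only [Finset.sum_map, Function.Embedding.coeFn_mk, walkGain_cons, ih]
      rw [Finset.sum_congr rfl (g := fun x : G.neighborSet u => φ u x * ∑ p ∈ G.finsetWalkLength k x v, walkGain φ p) (fun x _ => by rw [Finset.mul_sum]; exact Finset.sum_congr rfl fun p _ => walkGain_cons _ _)]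
      rw [← Finset.sum_subtype (G.neighborFinset u)
        (fun x => by rw [SimpleGraph.neighborFinset_def, Set.mem_toFinset])
        (fun w => φ u w * ∑ p ∈ G.finsetWalkLength k w v, walkGain φ p)]
      rw [SimpleGraph.neighborFinset_eq_filter, Finset.sum_filter]
      apply Finset.sum_congr rfl
      intro x _
      by_cases hax : G.Adj u x <;> simp [gainAdj, hax]
    · rintro ⟨x, hx⟩ - ⟨y, hy⟩ - hxy
      simp only [Function.onFun]
      rw [disjoint_iff_inf_le]
      intro p hp
      simp only [Finset.inf_eq_inter, Finset.mem_inter, Finset.mem_map,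
        Function.Embedding.coeFn_mk] at hp
      obtain ⟨⟨px, _, rfl⟩, ⟨py, hpy, hp⟩⟩ := hp
      cases hp
      simp at hxy

@[simp] lemma walkGain_one {G : SimpleGraph V} {u v : V} (p : G.Walk u v) :
    walkGain (fun _ _ => (1 : ℂ)) p = 1 := by
  induction p with
  | nil => rfl
  | cons h p ih => rw [walkGain_cons, ih, mul_one]

end WalkSum

/-- Acharya's spectral criterion: a connected signed graph is cospectral with
its underlying graph iff it is balanced. -/
theorem acharya_criterion {V : Type*} [Fintype V] [DecidableEq V]
    (G : SimpleGraph V) (hconn : G.Connected) (σ : V → V → ℝ)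
    (hsgn : ∀ i j, G.Adj i j → σ i j = 1 ∨ σ i j = -1) (hsymm : ∀ i j, σ i j = σ j i) :
    (gainAdj G (fun i j => (σ i j : ℂ))).charpoly = (G.adjMatrix ℂ).charpoly ↔
      GBalanced G (fun i j => (σ i j : ℂ)) := by
  set φ : V → V → ℂ := fun i j => ((σ i j : ℝ) : ℂ) with hφ
  have hsgn' : ∀ i j, G.Adj i j → φ i j = 1 ∨ φ i j = -1 := by
    intro i j h
    rcases hsgn i j h with h1 | h1
    · left; simp [hφ, h1]
    · right; simp [hφ, h1]
  have hs' : ∀ i j, φ i j = φ j i := by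
    intro i j; simp [hφ, hsymm i j]
  have hH1 : (gainAdj G φ).IsHermitian := by
    refine Matrix.ext fun i j => ?_
    rw [Matrix.conjTranspose_apply]
    by_cases h : G.Adj i j
    · simp [gainAdj, h, h.symm, hφ, ← Complex.ofReal_def, hsymm j i]
    · have h' : ¬ G.Adj j i := fun hc => h hc.symm
      simp [gainAdj, h, h']
  have hH2 : (G.adjMatrix ℂ).IsHermitian := by
    refine Matrix.ext fun i j => ?_
    rw [Matrix.conjTranspose_apply]
    by_cases h : G.Adj i j
    · simp [h, h.symm]
    · have h' : ¬ G.Adj j i := fun hc => h hc.symm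
      simp [h, h']
  have hadj : G.adjMatrix ℂ = gainAdj G (fun _ _ => 1) := by
    refine Matrix.ext fun i j => ?_
    by_cases h : G.Adj i j <;> simp [gainAdj, h]
  constructor
  · intro hchar u c hcyc
    rcases walkGain_pm hsgn' c with h1 | h1
    · exact h1
    · exfalso
      set k := c.length with hk
      have htr := trace_pow_eq_of_charpoly_eq hH1 hH2 hchar k
      have e1 : ((gainAdj G φ) ^ k).trace =
          ∑ v, ∑ p ∈ G.finsetWalkLength k v v, walkGain φ p := by
        rw [Matrix.trace]
        exact Finset.sum_congr rfl fun v _ => gainAdj_pow G φ k v v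
      have e2 : ((G.adjMatrix ℂ) ^ k).trace =
          ∑ v, ∑ p ∈ G.finsetWalkLength k v v, (1 : ℂ) := by
        rw [hadj, Matrix.trace]
        refine Finset.sum_congr rfl fun v _ => ?_
        rw [show ((gainAdj G (fun _ _ => 1)) ^ k).diag v
            = ((gainAdj G (fun _ _ => 1)) ^ k) v v from rfl, gainAdj_pow]
        exact Finset.sum_congr rfl fun p _ => walkGain_one p
      rw [e1, e2] at htr
      have hre := congrArg Complex.re htr
      rw [Complex.re_sum, Complex.re_sum] at hre
      have hmem : c ∈ G.finsetWalkLength k u u :=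
        SimpleGraph.mem_finsetWalkLength_iff.mpr rfl
      have hcomp : (∑ v, ∑ p ∈ G.finsetWalkLength k v v, walkGain φ p).re <
          (∑ v, ∑ p ∈ G.finsetWalkLength k v v, (1 : ℂ)).re := by
        rw [Complex.re_sum, Complex.re_sum]
        apply Finset.sum_lt_sum
        · intro v _
          rw [Complex.re_sum, Complex.re_sum]
          apply Finset.sum_le_sum
          intro p _
          rcases walkGain_pm hsgn' p with h | h <;> simp [h]
        · refine ⟨u, Finset.mem_univ u, ?_⟩
          rw [Complex.re_sum, Complex.re_sum]
          apply Finset.sum_lt_sum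
          · intro p _
            rcases walkGain_pm hsgn' p with h | h <;> simp [h]
          · exact ⟨c, hmem, by simp [h1]⟩
      rw [Complex.re_sum, Complex.re_sum] at hcomp
      rw [hre] at hcomp
      exact lt_irrefl _ hcomp
  · intro hbal
    obtain ⟨root⟩ : Nonempty V := hconn.nonempty
    have hgain_eq : ∀ (a b : V) (p q : G.Walk a b), walkGain φ p = walkGain φ q := by
      intro a b p q
      have hclosed := walkGain_closed hsgn' hs' hbal (p.append q.reverse).length a
        (p.append q.reverse) le_rfl
      rw [walkGain_append, walkGain_reverse hs'] at hclosed
      rcases walkGain_pm hsgn' p with h | h <;> rcases walkGain_pm hsgn' q with h' | h' <;>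
        rw [h, h'] <;> rw [h, h'] at hclosed <;> norm_num at hclosed
    set θ : V → ℂ := fun v => walkGain φ ((hconn.preconnected root v).some) with hθ
    have hθpm : ∀ v, θ v = 1 ∨ θ v = -1 := fun v => walkGain_pm hsgn' _
    have hθsq : ∀ v, θ v * θ v = 1 := by
      intro v; rcases hθpm v with h | h <;> rw [h] <;> norm_num
    have hedge : ∀ i j, G.Adj i j → φ i j = θ i * θ j := by
      intro i j h
      have hthis : θ j = walkGain φ (((hconn.preconnected root i).some).append
          (SimpleGraph.Walk.cons h SimpleGraph.Walk.nil)) := hgain_eq _ _ _ _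
      rw [walkGain_append, walkGain_cons, walkGain_nil, mul_one] at hthis
      calc φ i j = (θ i * θ i) * φ i j := by rw [hθsq]; ring
        _ = θ i * θ j := by rw [hthis]; ring
    set D : Matrix V V ℂ := Matrix.diagonal θ with hD
    have hD2 : D * D = 1 := by
      rw [hD, Matrix.diagonal_mul_diagonal]
      have : (fun v => θ v * θ v) = fun _ => (1 : ℂ) := funext hθsq
      rw [this, Matrix.diagonal_one]
    set uD : (Matrix V V ℂ)ˣ := ⟨D, D, hD2, hD2⟩ with huD
    have hconj : gainAdj G φ = D * G.adjMatrix ℂ * D := by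
      refine Matrix.ext fun i j => ?_
      rw [Matrix.mul_diagonal, Matrix.diagonal_mul]
      by_cases h : G.Adj i j
      · rw [SimpleGraph.adjMatrix_apply]
        simp only [gainAdj, h, if_true]
        rw [hedge i j h]; ring
      · rw [SimpleGraph.adjMatrix_apply]
        simp only [gainAdj, h, if_false]
        ring
    rw [hconj]
    exact charpoly_units_conj uD (G.adjMatrix ℂ)


end GG
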